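/- Let K be a C¹ solution of the integral equation K(x,y) + F(x,y) + ∫₀ˣ K(x,t)·F(t,y) dt = 0 on the triangle {(x,y) : 0 ≤ y ≤ x ≤ π}, define ψ_n(x) := φ_n(x) + ∫₀ˣ K(x,t)·φ_n(t) dt, and assume the series Σ_n c_n·ψ_n(x)·φ_n(t)ᵀ converges uniformly together with its term-by-term derivative in x. Then for every l: (i) ψ_l(π) = φ_l(π) / (1 + c_l·‖φ_l‖²_{L²}); and (ii) ℬ·ψ_l'(π) + 𝒜̃·ψ_l(π) = 0, where 𝒜̃ := 𝒜 − ℬ·K(π,π). -/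

import Mathlib

open Matrix MeasureTheory Set Filter intervalIntegral Topology

attribute [local instance] Matrix.normedAddCommGroup Matrix.normedSpace

namespace SL10

variable {N : ℕ}

local notation "Mat" => Matrix (Fin N) (Fin N) ℝ
local notation "Vec" => (Fin N → ℝ)






lemma norm_mulVec_le (A : Mat) (v : Vec) : ‖A *ᵥ v‖ ≤ N * ‖A‖ * ‖v‖ := by
  rw [pi_norm_le_iff_of_nonneg (by positivity)]
  intro i
  calc ‖(A *ᵥ v) i‖ = ‖∑ j, A i j * v j‖ := by simp [Matrix.mulVec, dotProduct]
  _ ≤ ∑ j, ‖A i j * v j‖ := norm_sum_le _ _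
  _ ≤ ∑ _j : Fin N, ‖A‖ * ‖v‖ := Finset.sum_le_sum (fun j _ => by
      rw [norm_mul]
      exact mul_le_mul (A.norm_entry_le_entrywise_sup_norm) (norm_le_pi_norm v j)
        (norm_nonneg _) (norm_nonneg _))
  _ = N * ‖A‖ * ‖v‖ := by simp [Finset.sum_const, mul_assoc]

lemma norm_matMul_le (A B : Mat) : ‖A * B‖ ≤ N * ‖A‖ * ‖B‖ := by
  rw [Matrix.norm_le_iff (by positivity)]
  intro i j
  calc ‖(A * B) i j‖ = ‖∑ k, A i k * B k j‖ := by simp [Matrix.mul_apply]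
  _ ≤ ∑ k, ‖A i k * B k j‖ := norm_sum_le _ _
  _ ≤ ∑ _k : Fin N, ‖A‖ * ‖B‖ := Finset.sum_le_sum (fun k _ => by
      rw [norm_mul]
      exact mul_le_mul (A.norm_entry_le_entrywise_sup_norm) (B.norm_entry_le_entrywise_sup_norm)
        (norm_nonneg _) (norm_nonneg _))
  _ = N * ‖A‖ * ‖B‖ := by simp [Finset.sum_const, mul_assoc]

lemma vecMulVec_mulVec_eq (v w u : Vec) : vecMulVec v w *ᵥ u = (w ⬝ᵥ u) • v := by
  ext i
  simp only [Matrix.mulVec, dotProduct, vecMulVec_apply, Pi.smul_apply, smul_eq_mul,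
    Finset.sum_mul]
  exact Finset.sum_congr rfl (fun j _ => by ring)

lemma mul_vecMulVec (A : Mat) (v w : Vec) : A * vecMulVec v w = vecMulVec (A *ᵥ v) w := by
  ext i j
  simp only [Matrix.mul_apply, vecMulVec_apply, Matrix.mulVec, dotProduct, Finset.sum_mul]
  exact Finset.sum_congr rfl (fun k _ => by ring)

lemma vecMulVec_add_left (v v' w : Vec) :
    vecMulVec (v + v') w = vecMulVec v w + vecMulVec v' w := by
  ext i j; simp [vecMulVec_apply, add_mul]

/-- `v ↦ vecMulVec v w` as a continuous linear map. -/
noncomputable def vmvL (w : Vec) : Vec →L[ℝ] Mat :=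
  LinearMap.toContinuousLinearMap
    { toFun := fun v => vecMulVec v w
      map_add' := fun u v => vecMulVec_add_left u v w
      map_smul' := fun r v => by ext i j; simp [vecMulVec_apply]; ring }

@[simp] lemma vmvL_apply (w v : Vec) : vmvL w v = vecMulVec v w := rfl

/-- `A ↦ A *ᵥ u` as a continuous linear map. -/
noncomputable def appL (u : Vec) : Mat →L[ℝ] Vec :=
  LinearMap.toContinuousLinearMap
    { toFun := fun A => A *ᵥ u
      map_add' := fun A B => Matrix.add_mulVec A B u
      map_smul' := fun r A => Matrix.smul_mulVec r A u }

@[simp] lemma appL_apply (u : Vec) (A : Mat) : appL u A = A *ᵥ u := rfl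

/-- `B ↦ A * B` as a continuous linear map. -/
noncomputable def lmulL (A : Mat) : Mat →L[ℝ] Mat :=
  LinearMap.toContinuousLinearMap (LinearMap.mulLeft ℝ A)

@[simp] lemma lmulL_apply (A B : Mat) : lmulL A B = A * B := rfl




/-- Fubini for a triangle: for continuous `f`,
`∫₀ˣ ∫₀ᵘ f u t dt du = ∫₀ˣ ∫ₜˣ f u t du dt`. -/
lemma triangle_swap {E : Type*} [NormedAddCommGroup E] [NormedSpace ℝ E] [CompleteSpace E]
    (f : ℝ → ℝ → E) (hf : Continuous (Function.uncurry f)) {x : ℝ} (hx : 0 ≤ x) :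
    (∫ u in (0:ℝ)..x, ∫ t in (0:ℝ)..u, f u t) = ∫ t in (0:ℝ)..x, ∫ u in t..x, f u t := by
  haveI : IsFiniteMeasure (volume.restrict (Ioc (0:ℝ) x)) :=
    ⟨by rw [Measure.restrict_apply_univ]; exact measure_Ioc_lt_top⟩
  obtain ⟨C, hC⟩ : ∃ C, ∀ p ∈ Icc (0:ℝ) x ×ˢ Icc (0:ℝ) x, ‖Function.uncurry f p‖ ≤ C :=
    (isCompact_Icc.prod isCompact_Icc).exists_bound_of_continuousOn hf.continuousOn
  set F : ℝ × ℝ → E := Set.indicator {p : ℝ × ℝ | p.2 < p.1} (Function.uncurry f) with hF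
  have hFm : StronglyMeasurable F :=
    hf.stronglyMeasurable.indicator (isOpen_lt continuous_snd continuous_fst).measurableSet
  have hint : Integrable F ((volume.restrict (Ioc (0:ℝ) x)).prod (volume.restrict (Ioc (0:ℝ) x))) := by
    refine Integrable.mono' (integrable_const (max C 0)) hFm.aestronglyMeasurable ?_
    rw [Measure.prod_restrict]
    filter_upwards [ae_restrict_mem (measurableSet_Ioc.prod measurableSet_Ioc)] with p hp
    calc ‖F p‖ ≤ ‖Function.uncurry f p‖ := norm_indicator_le_norm_self _ _
    _ ≤ C := hC p ⟨⟨hp.1.1.le, hp.1.2⟩, ⟨hp.2.1.le, hp.2.2⟩⟩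
    _ ≤ max C 0 := le_max_left _ _
  have key := MeasureTheory.integral_integral_swap (μ := volume.restrict (Ioc (0:ℝ) x))
    (ν := volume.restrict (Ioc (0:ℝ) x)) (f := fun u t => F (u, t)) hint
  calc (∫ u in (0:ℝ)..x, ∫ t in (0:ℝ)..u, f u t)
      = ∫ u in Ioc (0:ℝ) x, ∫ t in Ioc (0:ℝ) x, F (u, t) := by
        rw [intervalIntegral.integral_of_le hx]
        refine setIntegral_congr_fun measurableSet_Ioc (fun u hu => ?_)
        have h1 : (fun t => F (u, t)) = (Iio u).indicator (fun t => f u t) := by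
          funext t
          simp [hF, Set.indicator_apply, Function.uncurry]
        rw [h1, MeasureTheory.setIntegral_indicator measurableSet_Iio]
        have h2 : Ioc (0:ℝ) x ∩ Iio u = Ioo 0 u := by
          ext t
          simp only [mem_inter_iff, mem_Ioc, mem_Iio, mem_Ioo]
          exact ⟨fun ⟨⟨h1', _⟩, h3⟩ => ⟨h1', h3⟩,
            fun ⟨h1', h3⟩ => ⟨⟨h1', (h3.le.trans hu.2)⟩, h3⟩⟩
        rw [h2, intervalIntegral.integral_of_le hu.1.le,
          MeasureTheory.integral_Ioc_eq_integral_Ioo]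
  _ = ∫ t in Ioc (0:ℝ) x, ∫ u in Ioc (0:ℝ) x, F (u, t) := key
  _ = ∫ t in (0:ℝ)..x, ∫ u in t..x, f u t := by
        rw [intervalIntegral.integral_of_le hx]
        refine setIntegral_congr_fun measurableSet_Ioc (fun t ht => ?_)
        have h1 : (fun u => F (u, t)) = (Ioi t).indicator (fun u => f u t) := by
          funext u
          simp [hF, Set.indicator_apply, Function.uncurry]
        rw [h1, MeasureTheory.setIntegral_indicator measurableSet_Ioi]
        have h2 : Ioc (0:ℝ) x ∩ Ioi t = Ioc t x := by
          ext u
          simp only [mem_inter_iff, mem_Ioc, mem_Ioi]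
          exact ⟨fun ⟨⟨_, h2'⟩, h3⟩ => ⟨h3, h2'⟩,
            fun ⟨h3, h2'⟩ => ⟨⟨ht.1.trans h3, h2'⟩, h3⟩⟩
        rw [h2, intervalIntegral.integral_of_le ht.2]







/-- Partial derivative of `M` with respect to the first variable. -/
noncomputable def pdx (M : ℝ → ℝ → Mat) (x t : ℝ) : Mat :=
  fderiv ℝ (Function.uncurry M) (x, t) (1, 0)

lemma hasDerivAt_fst {M : ℝ → ℝ → Mat} (hM : ContDiff ℝ 1 (Function.uncurry M)) (x t : ℝ) :
    HasDerivAt (fun u => M u t) (pdx M x t) x := by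
  have h1 : HasFDerivAt (Function.uncurry M) (fderiv ℝ (Function.uncurry M) (x, t)) (x, t) :=
    (hM.differentiable one_ne_zero (x, t)).hasFDerivAt
  have h2 : HasDerivAt (fun u : ℝ => (u, t)) ((1:ℝ), (0:ℝ)) x :=
    (hasDerivAt_id x).prodMk (hasDerivAt_const x t)
  exact h1.comp_hasDerivAt x h2

lemma continuous_pdx {M : ℝ → ℝ → Mat} (hM : ContDiff ℝ 1 (Function.uncurry M)) :
    Continuous (fun p : ℝ × ℝ => pdx M p.1 p.2) := by
  have h := hM.continuous_fderiv_apply one_ne_zero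
  exact h.comp (continuous_id.prodMk continuous_const)

lemma continuous_prod_mulVec {M : ℝ → ℝ → Mat} (hM : Continuous (fun p : ℝ × ℝ => M p.1 p.2))
    {g : ℝ → Vec} (hg : Continuous g) :
    Continuous (fun p : ℝ × ℝ => M p.1 p.2 *ᵥ g p.2) :=
  hM.matrix_mulVec (hg.comp continuous_snd)

/-- The "diagonal + tail" function in the Leibniz rule. -/
noncomputable def leibD (M : ℝ → ℝ → Mat) (g : ℝ → Vec) (u : ℝ) : Vec :=
  M u u *ᵥ g u + ∫ t in (0:ℝ)..u, pdx M u t *ᵥ g t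

lemma continuous_leibD {M : ℝ → ℝ → Mat} (hM : ContDiff ℝ 1 (Function.uncurry M))
    {g : ℝ → Vec} (hg : Continuous g) : Continuous (leibD M g) := by
  have h1 : Continuous fun u : ℝ => M u u *ᵥ g u :=
    ((hM.continuous.comp (continuous_id.prodMk continuous_id)).matrix_mulVec hg)
  have h2 : Continuous fun u : ℝ => ∫ t in (0:ℝ)..u, pdx M u t *ᵥ g t := by
    exact intervalIntegral.continuous_parametric_intervalIntegral_of_continuous
      (μ := volume) (f := fun u t => pdx M u t *ᵥ g t)
      (by exact continuous_prod_mulVec (continuous_pdx hM) hg) continuous_id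
  exact h1.add h2

lemma W_eq_integral_leibD_nonneg {M : ℝ → ℝ → Mat} (hM : ContDiff ℝ 1 (Function.uncurry M))
    {g : ℝ → Vec} (hg : Continuous g) {x : ℝ} (hx : 0 ≤ x) :
    (∫ t in (0:ℝ)..x, M x t *ᵥ g t) = ∫ u in (0:ℝ)..x, leibD M g u := by
  have hMg : Continuous fun p : ℝ × ℝ => M p.1 p.2 *ᵥ g p.2 :=
    continuous_prod_mulVec hM.continuous hg
  have hpdxg : Continuous fun p : ℝ × ℝ => pdx M p.1 p.2 *ᵥ g p.2 :=
    continuous_prod_mulVec (continuous_pdx hM) hg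
  have hdiag : Continuous fun u : ℝ => M u u *ᵥ g u :=
    hMg.comp (continuous_id.prodMk continuous_id)
  -- the inner integral is interval integrable etc.
  have hint2 : ∀ y : ℝ, IntervalIntegrable (fun u => ∫ t in (0:ℝ)..u, pdx M u t *ᵥ g t)
      volume 0 y := fun y =>
    (intervalIntegral.continuous_parametric_intervalIntegral_of_continuous
      (μ := volume) (f := fun u t => pdx M u t *ᵥ g t) (by exact hpdxg)
      continuous_id).intervalIntegrable _ _
  symm
  simp only [leibD]
  rw [intervalIntegral.integral_add (hdiag.intervalIntegrable _ _) (hint2 x)]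
  -- triangle swap on the double integral
  have hswap := triangle_swap (fun u t => pdx M u t *ᵥ g t) (by exact hpdxg) hx
  rw [hswap]
  -- compute the inner integral via FTC-2
  have hin : ∀ t : ℝ, (∫ u in t..x, pdx M u t *ᵥ g t) = M x t *ᵥ g t - M t t *ᵥ g t := by
    intro t
    have hpdxt : Continuous fun u : ℝ => pdx M u t := by
      exact (continuous_pdx hM).comp (continuous_id.prodMk continuous_const)
    have h1 := (appL (g t)).intervalIntegral_comp_comm (a := t) (b := x) (μ := volume)
      (f := fun u => pdx M u t) (hpdxt.intervalIntegrable _ _)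
    change (∫ u in t..x, pdx M u t *ᵥ g t) = (∫ u in t..x, pdx M u t) *ᵥ g t at h1
    rw [h1, intervalIntegral.integral_eq_sub_of_hasDerivAt
      (fun u _ => hasDerivAt_fst hM u t) (hpdxt.intervalIntegrable _ _),
      Matrix.sub_mulVec]
  calc (∫ t in (0:ℝ)..x, M t t *ᵥ g t) + ∫ t in (0:ℝ)..x, ∫ u in t..x, pdx M u t *ᵥ g t
      = (∫ t in (0:ℝ)..x, M t t *ᵥ g t)
        + ∫ t in (0:ℝ)..x, (M x t *ᵥ g t - M t t *ᵥ g t) := by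
        rw [intervalIntegral.integral_congr (fun t _ => hin t)]
  _ = ∫ t in (0:ℝ)..x, M x t *ᵥ g t := by
        have hMx : Continuous fun tt : ℝ => M x tt *ᵥ g tt := by
          exact hMg.comp (continuous_const.prodMk continuous_id)
        rw [intervalIntegral.integral_sub (hMx.intervalIntegrable _ _)
          (hdiag.intervalIntegrable _ _)]
        abel



lemma W_eq_integral_leibD {M : ℝ → ℝ → Mat} (hM : ContDiff ℝ 1 (Function.uncurry M))
    {g : ℝ → Vec} (hg : Continuous g) (x : ℝ) :
    (∫ t in (0:ℝ)..x, M x t *ᵥ g t) = ∫ u in (0:ℝ)..x, leibD M g u := by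
  rcases le_or_gt 0 x with hx | hx
  · exact W_eq_integral_leibD_nonneg hM hg hx
  · set M' : ℝ → ℝ → Mat := fun a b => M (-a) (-b) with hM'def
    set g' : ℝ → Vec := fun t => g (-t) with hg'def
    have hM' : ContDiff ℝ 1 (Function.uncurry M') := by
      exact hM.comp contDiff_neg
    have hg' : Continuous g' := hg.comp continuous_neg
    have hpdx' : ∀ a b : ℝ, pdx M' a b = -pdx M (-a) (-b) := by
      intro a b
      have h1 : HasDerivAt (fun u => M' u b) (pdx M' a b) a := hasDerivAt_fst hM' a b
      have h2 : HasDerivAt (fun u : ℝ => M (-u) (-b)) ((-1 : ℝ) • pdx M (-a) (-b)) a := by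
        exact HasDerivAt.scomp a (hasDerivAt_fst hM (-a) (-b)) (hasDerivAt_neg a)
      have h3 := h1.unique h2
      rw [h3, neg_one_smul]
    have hy : (0:ℝ) ≤ -x := by linarith
    have h0 := W_eq_integral_leibD_nonneg hM' hg' hy
    have hL : (∫ t in (0:ℝ)..(-x), M' (-x) t *ᵥ g' t) = -∫ t in (0:ℝ)..x, M x t *ᵥ g t := by
      have h5 : ∀ t : ℝ, M' (-x) t *ᵥ g' t = M x (-t) *ᵥ g (-t) := fun t => by
        simp [hM'def, hg'def]
      rw [intervalIntegral.integral_congr (fun t _ => h5 t),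
        intervalIntegral.integral_comp_neg (a := (0:ℝ)) (b := -x)
          (f := fun t => M x t *ᵥ g t)]
      simp only [neg_neg, neg_zero]
      exact intervalIntegral.integral_symm 0 x
    have hld : ∀ u : ℝ, leibD M' g' u = leibD M g (-u) := by
      intro u
      simp only [leibD, hM'def, hg'def, neg_neg]
      congr 1
      have h4 : ∀ t : ℝ, pdx M' u t *ᵥ g' t = -(pdx M (-u) (-t) *ᵥ g (-t)) := by
        intro t
        show pdx M' u t *ᵥ g (-t) = _
        rw [hpdx', Matrix.neg_mulVec]
      rw [intervalIntegral.integral_congr (fun t _ => h4 t),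
        intervalIntegral.integral_comp_neg (a := (0:ℝ)) (b := u)
          (f := fun t => -(pdx M (-u) t *ᵥ g t))]
      simp only [neg_zero]
      rw [intervalIntegral.integral_neg, intervalIntegral.integral_symm 0 (-u), neg_neg]
    have hR : (∫ u in (0:ℝ)..(-x), leibD M' g' u) = -∫ u in (0:ℝ)..x, leibD M g u := by
      rw [intervalIntegral.integral_congr (fun u _ => hld u),
        intervalIntegral.integral_comp_neg (a := (0:ℝ)) (b := -x) (f := leibD M g)]
      simp only [neg_neg, neg_zero]
      exact intervalIntegral.integral_symm 0 x
    rw [hL, hR] at h0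
    exact neg_injective h0

/-- **Leibniz rule** for `x ↦ ∫₀ˣ M x t *ᵥ g t dt`. -/
lemma leibniz {M : ℝ → ℝ → Mat} (hM : ContDiff ℝ 1 (Function.uncurry M))
    {g : ℝ → Vec} (hg : Continuous g) (x : ℝ) :
    HasDerivAt (fun x' => ∫ t in (0:ℝ)..x', M x' t *ᵥ g t) (leibD M g x) x := by
  have heq : (fun x' => ∫ t in (0:ℝ)..x', M x' t *ᵥ g t)
      = fun x' => ∫ u in (0:ℝ)..x', leibD M g u :=
    funext (fun x' => W_eq_integral_leibD hM hg x')
  rw [heq]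
  exact intervalIntegral.integral_hasDerivAt_right
    ((continuous_leibD hM hg).intervalIntegrable 0 x)
    ((continuous_leibD hM hg).stronglyMeasurableAtFilter volume (nhds x))
    (continuous_leibD hM hg).continuousAt


/-- Interchange of summation and interval integration, given an eventual uniform bound on
the partial sums. -/
lemma hasSum_intervalIntegral {E : Type*} [NormedAddCommGroup E] [NormedSpace ℝ E]
    [CompleteSpace E]
    (t : ℕ → ℝ → E) (T : ℝ → E) {b : ℝ} (hb0 : 0 ≤ b) (hbπ : b ≤ Real.pi)
    (hcont : ∀ n, Continuous (t n))
    (C : ℝ)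
    (hbd : ∀ᶠ s : Finset ℕ in atTop, ∀ y ∈ Icc (0:ℝ) Real.pi, ‖∑ n ∈ s, t n y‖ ≤ C)
    (hpt : ∀ y ∈ Icc (0:ℝ) Real.pi, HasSum (fun n => t n y) (T y)) :
    HasSum (fun n => ∫ y in (0:ℝ)..b, t n y) (∫ y in (0:ℝ)..b, T y) := by
  have hIoc : Set.uIoc (0:ℝ) b = Ioc 0 b := Set.uIoc_of_le hb0
  have hsub : Ioc (0:ℝ) b ⊆ Icc (0:ℝ) Real.pi := fun y hy => ⟨hy.1.le, hy.2.trans hbπ⟩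
  have key : Tendsto (fun s : Finset ℕ => ∫ y in (0:ℝ)..b, ∑ n ∈ s, t n y) atTop
      (𝓝 (∫ y in (0:ℝ)..b, T y)) := by
    apply intervalIntegral.tendsto_integral_filter_of_dominated_convergence
      (bound := fun _ => C)
    · exact Filter.Eventually.of_forall fun s =>
        ((continuous_finset_sum s fun n _ => hcont n).aestronglyMeasurable)
    · filter_upwards [hbd] with s hs
      refine Filter.Eventually.of_forall fun y hy => ?_
      rw [hIoc] at hy
      exact hs y (hsub hy)
    · exact intervalIntegrable_const
    · refine Filter.Eventually.of_forall fun y hy => ?_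
      rw [hIoc] at hy
      exact hpt y (hsub hy)
  have heq : (fun s : Finset ℕ => ∑ n ∈ s, ∫ y in (0:ℝ)..b, t n y)
      = fun s : Finset ℕ => ∫ y in (0:ℝ)..b, ∑ n ∈ s, t n y :=
    funext fun s =>
      (intervalIntegral.integral_finset_sum fun n _ => (hcont n).intervalIntegrable _ _).symm
  show Tendsto (fun s : Finset ℕ => ∑ n ∈ s, ∫ y in (0:ℝ)..b, t n y) atTop (𝓝 (∫ y in (0:ℝ)..b, T y))
  rw [heq]
  exact key


end SL10
/-- For a C¹ solution `K` of the integral equation, with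
`ψ n x := φ n x + ∫₀ˣ K(x,t)·φ n t dt`, assuming the series `∑ n, c n • ψ n x ⬝ (φ n t)ᵀ`
converges uniformly together with its term-by-term derivative in `x`, one has, for every `l`:
(i) `ψ l π = φ l π / (1 + c l ‖φ l‖²)`; (ii) `ℬ·(ψ l)'(π) + 𝒜'·ψ l π = 0` where
`𝒜' := 𝒜 - ℬ·K(π,π)` (the matrix `𝒜̃` of the paper). -/
theorem boundary_condition_at_pi
    (N : ℕ) (hN : 1 ≤ N)
    (P : ℝ → Matrix (Fin N) (Fin N) ℝ) (A B 𝒜 ℬ : Matrix (Fin N) (Fin N) ℝ)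
    (hP : ContinuousOn P (Set.Icc 0 Real.pi))
    (hPsymm : ∀ x ∈ Set.Icc (0:ℝ) Real.pi, (P x)ᵀ = P x)
    (hAB : B * Aᵀ = A * Bᵀ) (hAB' : ℬ * 𝒜ᵀ = 𝒜 * ℬᵀ)
    (hrkAB : (Matrix.fromCols A B).rank = N)
    (hrkAB' : (Matrix.fromCols 𝒜 ℬ).rank = N)
    -- `(φ n)` is an L²-orthogonal, complete system of eigenfunctions with eigenvalues `ev n`
    (φ : ℕ → ℝ → (Fin N → ℝ)) (ev : ℕ → ℝ) (c : ℕ → ℝ)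
    (hφC : ∀ n, ContDiff ℝ 2 (φ n))
    (hφne : ∀ n, ∃ x ∈ Set.Icc (0:ℝ) Real.pi, φ n x ≠ 0)
    (hφeq : ∀ n, ∀ x ∈ Set.Icc (0:ℝ) Real.pi,
      -(deriv (deriv (φ n)) x) + P x *ᵥ φ n x = ev n • φ n x)
    (hφbc0 : ∀ n, B *ᵥ deriv (φ n) 0 + A *ᵥ φ n 0 = 0)
    (hφbcπ : ∀ n, ℬ *ᵥ deriv (φ n) Real.pi + 𝒜 *ᵥ φ n Real.pi = 0)
    (horth : ∀ m n : ℕ, m ≠ n → ∫ x in (0:ℝ)..Real.pi, φ m x ⬝ᵥ φ n x = 0)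
    (htotal : ∀ f : ℝ → Fin N → ℝ, ContinuousOn f (Set.Icc 0 Real.pi) →
      (∀ n, ∫ x in (0:ℝ)..Real.pi, f x ⬝ᵥ φ n x = 0) →
      ∀ x ∈ Set.Icc (0:ℝ) Real.pi, f x = 0)
    (hc : ∀ n, 0 < 1 + c n * ∫ x in (0:ℝ)..Real.pi, φ n x ⬝ᵥ φ n x)
    -- `F(x,y) = ∑ n, c n • φ n x ⬝ (φ n y)ᵀ`, converging uniformly, with `F` of class C²
    (F : ℝ → ℝ → Matrix (Fin N) (Fin N) ℝ)
    (hFsum : ∀ x ∈ Set.Icc (0:ℝ) Real.pi, ∀ y ∈ Set.Icc (0:ℝ) Real.pi,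
      HasSum (fun n => c n • Matrix.vecMulVec (φ n x) (φ n y)) (F x y))
    (hFunif : TendstoUniformlyOn
      (fun (s : Finset ℕ) (p : ℝ × ℝ) => ∑ n ∈ s, c n • Matrix.vecMulVec (φ n p.1) (φ n p.2))
      (fun p => F p.1 p.2) Filter.atTop (Set.Icc 0 Real.pi ×ˢ Set.Icc 0 Real.pi))
    (hFC : ContDiff ℝ 2 (Function.uncurry F))
    -- `K` is a C¹ solution of the integral equation on the triangle
    (K : ℝ → ℝ → Matrix (Fin N) (Fin N) ℝ)
    (hKC : ContDiff ℝ 1 (Function.uncurry K))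
    (hKIE : ∀ x y : ℝ, 0 ≤ y → y ≤ x → x ≤ Real.pi →
      K x y + F x y + (∫ t in (0:ℝ)..x, K x t * F t y) = 0)
    (ψ : ℕ → ℝ → (Fin N → ℝ))
    (hψ : ∀ n x, ψ n x = φ n x + ∫ t in (0:ℝ)..x, K x t *ᵥ φ n t)
    -- uniform convergence of `∑ n, c n • ψ n x ⬝ (φ n t)ᵀ` and its term-by-term
    -- derivative in `x`
    (S S' : ℝ × ℝ → Matrix (Fin N) (Fin N) ℝ)
    (hS : TendstoUniformlyOn
      (fun (s : Finset ℕ) (p : ℝ × ℝ) => ∑ n ∈ s, c n • Matrix.vecMulVec (ψ n p.1) (φ n p.2))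
      S Filter.atTop (Set.Icc 0 Real.pi ×ˢ Set.Icc 0 Real.pi))
    (hS' : TendstoUniformlyOn
      (fun (s : Finset ℕ) (p : ℝ × ℝ) =>
        ∑ n ∈ s, c n • Matrix.vecMulVec (deriv (ψ n) p.1) (φ n p.2))
      S' Filter.atTop (Set.Icc 0 Real.pi ×ˢ Set.Icc 0 Real.pi)) :
    ∀ l : ℕ,
      ψ l Real.pi
        = (1 + c l * ∫ t in (0:ℝ)..Real.pi, φ l t ⬝ᵥ φ l t)⁻¹ • φ l Real.pi ∧
      ℬ *ᵥ deriv (ψ l) Real.pi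
        + (𝒜 - ℬ * K Real.pi Real.pi) *ᵥ ψ l Real.pi = 0 := by
  intro l
  have hπ0 : (0:ℝ) ≤ Real.pi := Real.pi_nonneg
  have hπpos : (0:ℝ) < Real.pi := Real.pi_pos
  have hπmem : Real.pi ∈ Set.Icc (0:ℝ) Real.pi := ⟨hπ0, le_rfl⟩
  have h0mem : (0:ℝ) ∈ Set.Icc (0:ℝ) Real.pi := ⟨le_rfl, hπ0⟩
  set sq : Set (ℝ × ℝ) := Set.Icc (0:ℝ) Real.pi ×ˢ Set.Icc (0:ℝ) Real.pi with hsqdef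
  -- basic continuity facts
  have hφcont : ∀ n, Continuous (φ n) := fun n => (hφC n).continuous
  have hφ'cont : ∀ n, Continuous (deriv (φ n)) := fun n => (hφC n).continuous_deriv one_le_two
  -- differentiability of ψ
  have hψder : ∀ n x, HasDerivAt (ψ n) (deriv (φ n) x + SL10.leibD K (φ n) x) x := by
    intro n x
    have h1 : HasDerivAt (φ n) (deriv (φ n) x) x :=
      (((hφC n).differentiable two_ne_zero) x).hasDerivAt
    have h2 := SL10.leibniz hKC (hφcont n) x
    have h3 := h1.add h2
    have hfun : (fun x => φ n x + ∫ t in (0:ℝ)..x, K x t *ᵥ φ n t) = ψ n :=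
      funext fun x => (hψ n x).symm
    rw [← hfun]; exact h3
  have hψderiv : ∀ n x, deriv (ψ n) x = deriv (φ n) x + SL10.leibD K (φ n) x :=
    fun n x => (hψder n x).deriv
  have hψcont : ∀ n, Continuous (ψ n) :=
    fun n => Differentiable.continuous (fun x => (hψder n x).differentiableAt)
  have hψ'cont : ∀ n, Continuous (deriv (ψ n)) := by
    intro n
    have h : deriv (ψ n) = fun x => deriv (φ n) x + SL10.leibD K (φ n) x :=
      funext (hψderiv n)
    rw [h]
    exact (hφ'cont n).add (SL10.continuous_leibD hKC (hφcont n))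
  -- continuity of partial sums
  have hPScont : ∀ s : Finset ℕ, Continuous fun p : ℝ × ℝ =>
      ∑ n ∈ s, c n • Matrix.vecMulVec (ψ n p.1) (φ n p.2) := fun s =>
    continuous_finset_sum s fun n _ =>
      (((hψcont n).comp continuous_fst).matrix_vecMulVec
        ((hφcont n).comp continuous_snd)).const_smul (c n)
  have hPS'cont : ∀ s : Finset ℕ, Continuous fun p : ℝ × ℝ =>
      ∑ n ∈ s, c n • Matrix.vecMulVec (deriv (ψ n) p.1) (φ n p.2) := fun s =>
    continuous_finset_sum s fun n _ =>
      (((hψ'cont n).comp continuous_fst).matrix_vecMulVec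
        ((hφcont n).comp continuous_snd)).const_smul (c n)
  -- continuity of the limits
  have hScont : ContinuousOn S sq :=
    hS.continuousOn (Filter.Frequently.of_forall fun s => (hPScont s).continuousOn)
  have hS'cont : ContinuousOn S' sq :=
    hS'.continuousOn (Filter.Frequently.of_forall fun s => (hPS'cont s).continuousOn)
  -- bounds
  have hsqcomp : IsCompact sq := isCompact_Icc.prod isCompact_Icc
  obtain ⟨CS, hCS⟩ := hsqcomp.exists_bound_of_continuousOn hScont
  obtain ⟨CS', hCS'⟩ := hsqcomp.exists_bound_of_continuousOn hS'cont
  obtain ⟨CF, hCF⟩ := hsqcomp.exists_bound_of_continuousOn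
    (hFC.continuous.comp (continuous_fst.prodMk continuous_snd)).continuousOn
  obtain ⟨CK, hCK⟩ := hsqcomp.exists_bound_of_continuousOn
    (hKC.continuous.comp (continuous_fst.prodMk continuous_snd)).continuousOn
  obtain ⟨Cφ, hCφ⟩ := isCompact_Icc.exists_bound_of_continuousOn (hφcont l).continuousOn
  have h00sq : ((0:ℝ), (0:ℝ)) ∈ sq := ⟨h0mem, h0mem⟩
  have hCS0 : 0 ≤ CS := le_trans (norm_nonneg _) (hCS _ h00sq)
  have hCS'0 : 0 ≤ CS' := le_trans (norm_nonneg _) (hCS' _ h00sq)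
  have hCF0 : 0 ≤ CF := le_trans (norm_nonneg _) (hCF _ h00sq)
  have hCK0 : 0 ≤ CK := le_trans (norm_nonneg _) (hCK _ h00sq)
  have hCφ0 : 0 ≤ Cφ := le_trans (norm_nonneg _) (hCφ _ h0mem)
  -- eventual uniform bounds for the partial sums
  have hbound : ∀ (G : Finset ℕ → ℝ × ℝ → Matrix (Fin N) (Fin N) ℝ)
      (L : ℝ × ℝ → Matrix (Fin N) (Fin N) ℝ) (CL : ℝ),
      TendstoUniformlyOn G L Filter.atTop sq → (∀ p ∈ sq, ‖L p‖ ≤ CL) →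
      ∀ᶠ s : Finset ℕ in Filter.atTop, ∀ p ∈ sq, ‖G s p‖ ≤ CL + 1 := by
    intro G L CL hGL hL
    filter_upwards [Metric.tendstoUniformlyOn_iff.mp hGL 1 one_pos] with s hs p hp
    have h6 : ‖G s p - L p‖ ≤ 1 := by
      rw [← dist_eq_norm, dist_comm]
      exact (hs p hp).le
    calc ‖G s p‖ = ‖L p + (G s p - L p)‖ := by rw [add_sub_cancel]
    _ ≤ ‖L p‖ + ‖G s p - L p‖ := norm_add_le _ _
    _ ≤ CL + 1 := add_le_add (hL p hp) h6
  have hbdS := hbound _ _ CS hS hCS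
  have hbdS' := hbound _ _ CS' hS' hCS'
  have hbdF := hbound _ _ CF hFunif (fun p hp => hCF p hp)
  -- pointwise convergence
  have hSpt : ∀ p ∈ sq, HasSum (fun n => c n • Matrix.vecMulVec (ψ n p.1) (φ n p.2)) (S p) :=
    fun p hp => hS.tendsto_at hp
  have hS'pt : ∀ p ∈ sq,
      HasSum (fun n => c n • Matrix.vecMulVec (deriv (ψ n) p.1) (φ n p.2)) (S' p) :=
    fun p hp => hS'.tendsto_at hp
  -- Step C : K = -S on the triangle
  have stepC : ∀ x y : ℝ, 0 ≤ y → y ≤ x → x ≤ Real.pi → K x y = -(S (x, y)) := by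
    intro x y hy0 hyx hxπ
    have hx0 : 0 ≤ x := hy0.trans hyx
    have hxm : x ∈ Set.Icc (0:ℝ) Real.pi := ⟨hx0, hxπ⟩
    have hym : y ∈ Set.Icc (0:ℝ) Real.pi := ⟨hy0, hyx.trans hxπ⟩
    have hKxcont : Continuous fun t => K x t :=
      hKC.continuous.comp (continuous_const.prodMk continuous_id)
    have hsum2 : HasSum
        (fun n => ∫ t in (0:ℝ)..x, K x t * (c n • Matrix.vecMulVec (φ n t) (φ n y)))
        (∫ t in (0:ℝ)..x, K x t * F t y) := by
      apply SL10.hasSum_intervalIntegral _ _ hx0 hxπ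
      · intro n
        exact hKxcont.matrix_mul
          ((((hφcont n).matrix_vecMulVec continuous_const)).const_smul (c n))
      · filter_upwards [hbdF] with s hs t ht
        rw [← Finset.mul_sum]
        calc ‖K x t * ∑ n ∈ s, c n • Matrix.vecMulVec (φ n t) (φ n y)‖
            ≤ N * ‖K x t‖ * ‖∑ n ∈ s, c n • Matrix.vecMulVec (φ n t) (φ n y)‖ :=
              SL10.norm_matMul_le _ _
        _ ≤ N * CK * (CF + 1) := by
              have h7 : ‖K x t‖ ≤ CK := hCK (x, t) ⟨hxm, ht⟩
              have h8 := hs (t, y) ⟨ht, hym⟩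
              have hn0 : (0:ℝ) ≤ N := Nat.cast_nonneg N
              gcongr
      · intro τ hτ
        have h9 := (hFsum τ hτ y hym).mapL (SL10.lmulL (K x τ))
        simp only [SL10.lmulL_apply] at h9
        exact h9
    have hterm : ∀ n, c n • Matrix.vecMulVec (ψ n x) (φ n y)
        = c n • Matrix.vecMulVec (φ n x) (φ n y)
          + ∫ t in (0:ℝ)..x, K x t * (c n • Matrix.vecMulVec (φ n t) (φ n y)) := by
      intro n
      rw [hψ n x, SL10.vecMulVec_add_left, smul_add]
      congr 1
      have hintKφ : IntervalIntegrable (fun t => K x t *ᵥ φ n t) volume 0 x :=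
        (hKxcont.matrix_mulVec (hφcont n)).intervalIntegrable _ _
      have h1 := (SL10.vmvL (φ n y)).intervalIntegral_comp_comm (μ := volume)
        (a := 0) (b := x) (f := fun t => K x t *ᵥ φ n t) hintKφ
      change (∫ t in (0:ℝ)..x, vecMulVec (K x t *ᵥ φ n t) (φ n y))
        = vecMulVec (∫ t in (0:ℝ)..x, K x t *ᵥ φ n t) (φ n y) at h1
      rw [← h1, ← intervalIntegral.integral_smul]
      refine intervalIntegral.integral_congr fun t _ => ?_
      rw [← SL10.mul_vecMulVec, Matrix.mul_smul]
    have hSxy : S (x, y) = F x y + ∫ t in (0:ℝ)..x, K x t * F t y := by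
      refine (hSpt (x, y) ⟨hxm, hym⟩).unique ?_
      have h10 := (hFsum x hxm y hym).add hsum2
      have heq : (fun n => c n • Matrix.vecMulVec (ψ n x) (φ n y))
          = fun n => c n • Matrix.vecMulVec (φ n x) (φ n y)
            + ∫ t in (0:ℝ)..x, K x t * (c n • Matrix.vecMulVec (φ n t) (φ n y)) :=
        funext hterm
      rw [heq]
      exact h10
    have h11 : K x y + (F x y + ∫ t in (0:ℝ)..x, K x t * F t y) = 0 := by
      rw [← add_assoc]
      exact hKIE x y hy0 hyx hxπ
    rw [hSxy]
    exact eq_neg_of_add_eq_zero_left h11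
  -- derivative of the terms of the S-series
  have hDn : ∀ (n : ℕ) (y u : ℝ), HasDerivAt (fun u => c n • Matrix.vecMulVec (ψ n u) (φ n y))
      (c n • Matrix.vecMulVec (deriv (ψ n) u) (φ n y)) u := by
    intro n y u
    have h1 : HasDerivAt (ψ n) (deriv (ψ n) u) u := by
      rw [hψderiv n u]; exact hψder n u
    have h2 := ((SL10.vmvL (φ n y)).hasFDerivAt).comp_hasDerivAt u h1
    have h3 := h2.const_smul (c n)
    exact h3
  -- FTC identity for S
  have hFTC : ∀ y ∈ Set.Icc (0:ℝ) Real.pi, ∀ x ∈ Set.Icc (0:ℝ) Real.pi,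
      S (x, y) = S (0, y) + ∫ u in (0:ℝ)..x, S' (u, y) := by
    intro y hy x hx
    have hn : ∀ n, c n • Matrix.vecMulVec (ψ n x) (φ n y)
        - c n • Matrix.vecMulVec (ψ n 0) (φ n y)
        = ∫ u in (0:ℝ)..x, c n • Matrix.vecMulVec (deriv (ψ n) u) (φ n y) := by
      intro n
      rw [intervalIntegral.integral_eq_sub_of_hasDerivAt (fun u _ => hDn n y u)
        ((((hψ'cont n).matrix_vecMulVec continuous_const).const_smul
          (c n)).intervalIntegrable _ _)]
    have h1 : HasSum (fun n => c n • Matrix.vecMulVec (ψ n x) (φ n y)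
        - c n • Matrix.vecMulVec (ψ n 0) (φ n y)) (S (x, y) - S (0, y)) :=
      (hSpt (x, y) ⟨hx, hy⟩).sub (hSpt (0, y) ⟨h0mem, hy⟩)
    have h2 : HasSum (fun n => ∫ u in (0:ℝ)..x, c n • Matrix.vecMulVec (deriv (ψ n) u) (φ n y))
        (∫ u in (0:ℝ)..x, S' (u, y)) := by
      apply SL10.hasSum_intervalIntegral _ _ hx.1 hx.2
      · intro n
        exact ((hψ'cont n).matrix_vecMulVec continuous_const).const_smul (c n)
      · filter_upwards [hbdS'] with s hs u hu
        exact hs (u, y) ⟨hu, hy⟩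
      · intro u hu
        exact hS'pt (u, y) ⟨hu, hy⟩
    have h3 : S (x, y) - S (0, y) = ∫ u in (0:ℝ)..x, S' (u, y) := by
      refine HasSum.unique ?_ h2
      have heq : (fun n => c n • Matrix.vecMulVec (ψ n x) (φ n y)
          - c n • Matrix.vecMulVec (ψ n 0) (φ n y))
          = fun n => ∫ u in (0:ℝ)..x, c n • Matrix.vecMulVec (deriv (ψ n) u) (φ n y) :=
        funext hn
      rw [← heq]
      exact h1
    exact sub_eq_iff_eq_add'.mp h3
  -- Step D : pdx K (π, y) = -S'(π, y) for y < π
  have hKx : ∀ y : ℝ, 0 ≤ y → y < Real.pi → SL10.pdx K Real.pi y = -(S' (Real.pi, y)) := by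
    intro y hy0 hyπ
    have hym : y ∈ Set.Icc (0:ℝ) Real.pi := ⟨hy0, hyπ.le⟩
    have hσc : ContinuousOn (fun u => S' (u, y)) (Set.Icc (0:ℝ) Real.pi) := by
      have := hS'cont.comp ((continuous_id.prodMk continuous_const).continuousOn
        (s := Set.Icc (0:ℝ) Real.pi)) (fun u hu => ⟨hu, hym⟩)
      exact this
    have hσint : @IntervalIntegrable (Matrix (Fin N) (Fin N) ℝ) _ NormedAddGroup.toENormedAddMonoid
        (fun u => S' (u, y)) volume 0 Real.pi := by
      apply ContinuousOn.intervalIntegrable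
      rwa [Set.uIcc_of_le hπ0]
    have h1 : HasDerivWithinAt (fun x => ∫ u in (0:ℝ)..x, S' (u, y)) (S' (Real.pi, y))
        (Set.Iic Real.pi) Real.pi := by
      have : TopologicalSpace.PseudoMetrizableSpace (Matrix (Fin N) (Fin N) ℝ) :=
        inferInstanceAs (TopologicalSpace.PseudoMetrizableSpace (Fin N → Fin N → ℝ))
      apply intervalIntegral.integral_hasDerivWithinAt_right hσint (t := Set.Iic Real.pi)
      · exact ⟨Set.Icc (0:ℝ) Real.pi,
          by rw [← nhdsWithin_Icc_eq_nhdsLE hπpos]; exact self_mem_nhdsWithin,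
          (have h := hσc.aestronglyMeasurable (μ := volume) measurableSet_Icc; h)⟩
      · have h12 := hσc Real.pi hπmem
        rwa [ContinuousWithinAt, nhdsWithin_Icc_eq_nhdsLE hπpos] at h12
    have h2 : HasDerivWithinAt (fun x => K x y) (-(S' (Real.pi, y)))
        (Set.Icc y Real.pi) Real.pi := by
      have h2a : HasDerivWithinAt
          (fun x => -(S (0, y) + ∫ u in (0:ℝ)..x, S' (u, y))) (-(S' (Real.pi, y)))
          (Set.Icc y Real.pi) Real.pi :=
        ((h1.mono Set.Icc_subset_Iic_self).const_add (S (0, y))).neg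
      apply h2a.congr
      · intro x hx
        rw [stepC x y hy0 hx.1 hx.2, hFTC y hym x ⟨hy0.trans hx.1, hx.2⟩]
      · rw [stepC Real.pi y hy0 hyπ.le le_rfl, hFTC y hym Real.pi hπmem]
    have h3 : HasDerivWithinAt (fun x => K x y) (SL10.pdx K Real.pi y)
        (Set.Icc y Real.pi) Real.pi :=
      (SL10.hasDerivAt_fst hKC Real.pi y).hasDerivWithinAt
    have hu : UniqueDiffWithinAt ℝ (Set.Icc y Real.pi) Real.pi :=
      (uniqueDiffOn_Icc hyπ) Real.pi ⟨hyπ.le, le_rfl⟩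
    exact (h3.derivWithin hu).symm.trans (h2.derivWithin hu)
  -- the L² norm of φ l
  set I : ℝ := ∫ t in (0:ℝ)..Real.pi, φ l t ⬝ᵥ φ l t with hIdef
  -- interchange sums and integrals at x = π
  have hU3 : (∫ τ in (0:ℝ)..Real.pi, S (Real.pi, τ) *ᵥ φ l τ) = (c l * I) • ψ l Real.pi := by
    have hsum : HasSum
        (fun n => ∫ τ in (0:ℝ)..Real.pi, (c n • Matrix.vecMulVec (ψ n Real.pi) (φ n τ)) *ᵥ φ l τ)
        (∫ τ in (0:ℝ)..Real.pi, S (Real.pi, τ) *ᵥ φ l τ) := by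
      apply SL10.hasSum_intervalIntegral _ _ hπ0 le_rfl
      · intro n
        exact ((continuous_const.matrix_vecMulVec (hφcont n)).const_smul
          (c n)).matrix_mulVec (hφcont l)
      · filter_upwards [hbdS] with s hs τ hτ
        have h13 := map_sum (SL10.appL (φ l τ))
          (fun n => c n • Matrix.vecMulVec (ψ n Real.pi) (φ n τ)) s
        simp only [SL10.appL_apply] at h13
        rw [← h13]
        calc ‖(∑ n ∈ s, c n • Matrix.vecMulVec (ψ n Real.pi) (φ n τ)) *ᵥ φ l τ‖
            ≤ N * ‖∑ n ∈ s, c n • Matrix.vecMulVec (ψ n Real.pi) (φ n τ)‖ * ‖φ l τ‖ :=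
              SL10.norm_mulVec_le _ _
        _ ≤ N * (CS + 1) * Cφ := by
              have h14 := hs (Real.pi, τ) ⟨hπmem, hτ⟩
              have h15 := hCφ τ hτ
              have hn0 : (0:ℝ) ≤ N := Nat.cast_nonneg N
              gcongr
      · intro τ hτ
        have h16 := (hSpt (Real.pi, τ) ⟨hπmem, hτ⟩).mapL (SL10.appL (φ l τ))
        simpa only [SL10.appL_apply] using h16
    have hval : ∀ n, (∫ τ in (0:ℝ)..Real.pi,
        (c n • Matrix.vecMulVec (ψ n Real.pi) (φ n τ)) *ᵥ φ l τ)
        = (c n * ∫ τ in (0:ℝ)..Real.pi, φ n τ ⬝ᵥ φ l τ) • ψ n Real.pi := by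
      intro n
      have h17 : ∀ τ : ℝ, (c n • Matrix.vecMulVec (ψ n Real.pi) (φ n τ)) *ᵥ φ l τ
          = (c n * (φ n τ ⬝ᵥ φ l τ)) • ψ n Real.pi := by
        intro τ
        rw [Matrix.smul_mulVec, SL10.vecMulVec_mulVec_eq, smul_smul]
      rw [intervalIntegral.integral_congr (fun τ _ => h17 τ),
        intervalIntegral.integral_smul_const, intervalIntegral.integral_const_mul]
    have hsingle : HasSum
        (fun n => (c n * ∫ τ in (0:ℝ)..Real.pi, φ n τ ⬝ᵥ φ l τ) • ψ n Real.pi)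
        ((c l * I) • ψ l Real.pi) := by
      have h0' : ∀ n, n ≠ l →
          (c n * ∫ τ in (0:ℝ)..Real.pi, φ n τ ⬝ᵥ φ l τ) • ψ n Real.pi = 0 := by
        intro n hn
        rw [horth n l hn]
        simp
      have h18 := hasSum_single
        (f := fun n => (c n * ∫ τ in (0:ℝ)..Real.pi, φ n τ ⬝ᵥ φ l τ) • ψ n Real.pi) l h0'
      simpa only [hIdef] using h18
    have heq := funext hval
    rw [heq] at hsum
    exact hsum.unique hsingle
  have hU4 : (∫ τ in (0:ℝ)..Real.pi, S' (Real.pi, τ) *ᵥ φ l τ)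
      = (c l * I) • deriv (ψ l) Real.pi := by
    have hsum : HasSum
        (fun n => ∫ τ in (0:ℝ)..Real.pi,
          (c n • Matrix.vecMulVec (deriv (ψ n) Real.pi) (φ n τ)) *ᵥ φ l τ)
        (∫ τ in (0:ℝ)..Real.pi, S' (Real.pi, τ) *ᵥ φ l τ) := by
      apply SL10.hasSum_intervalIntegral _ _ hπ0 le_rfl
      · intro n
        exact ((continuous_const.matrix_vecMulVec (hφcont n)).const_smul
          (c n)).matrix_mulVec (hφcont l)
      · filter_upwards [hbdS'] with s hs τ hτ
        have h13 := map_sum (SL10.appL (φ l τ))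
          (fun n => c n • Matrix.vecMulVec (deriv (ψ n) Real.pi) (φ n τ)) s
        simp only [SL10.appL_apply] at h13
        rw [← h13]
        calc ‖(∑ n ∈ s, c n • Matrix.vecMulVec (deriv (ψ n) Real.pi) (φ n τ)) *ᵥ φ l τ‖
            ≤ N * ‖∑ n ∈ s, c n • Matrix.vecMulVec (deriv (ψ n) Real.pi) (φ n τ)‖ * ‖φ l τ‖ :=
              SL10.norm_mulVec_le _ _
        _ ≤ N * (CS' + 1) * Cφ := by
              have h14 := hs (Real.pi, τ) ⟨hπmem, hτ⟩
              have h15 := hCφ τ hτ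
              have hn0 : (0:ℝ) ≤ N := Nat.cast_nonneg N
              gcongr
      · intro τ hτ
        have h16 := (hS'pt (Real.pi, τ) ⟨hπmem, hτ⟩).mapL (SL10.appL (φ l τ))
        simpa only [SL10.appL_apply] using h16
    have hval : ∀ n, (∫ τ in (0:ℝ)..Real.pi,
        (c n • Matrix.vecMulVec (deriv (ψ n) Real.pi) (φ n τ)) *ᵥ φ l τ)
        = (c n * ∫ τ in (0:ℝ)..Real.pi, φ n τ ⬝ᵥ φ l τ) • deriv (ψ n) Real.pi := by
      intro n
      have h17 : ∀ τ : ℝ, (c n • Matrix.vecMulVec (deriv (ψ n) Real.pi) (φ n τ)) *ᵥ φ l τ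
          = (c n * (φ n τ ⬝ᵥ φ l τ)) • deriv (ψ n) Real.pi := by
        intro τ
        rw [Matrix.smul_mulVec, SL10.vecMulVec_mulVec_eq, smul_smul]
      rw [intervalIntegral.integral_congr (fun τ _ => h17 τ),
        intervalIntegral.integral_smul_const, intervalIntegral.integral_const_mul]
    have hsingle : HasSum
        (fun n => (c n * ∫ τ in (0:ℝ)..Real.pi, φ n τ ⬝ᵥ φ l τ) • deriv (ψ n) Real.pi)
        ((c l * I) • deriv (ψ l) Real.pi) := by
      have h0' : ∀ n, n ≠ l →
          (c n * ∫ τ in (0:ℝ)..Real.pi, φ n τ ⬝ᵥ φ l τ) • deriv (ψ n) Real.pi = 0 := by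
        intro n hn
        rw [horth n l hn]
        simp
      have h18 := hasSum_single
        (f := fun n => (c n * ∫ τ in (0:ℝ)..Real.pi, φ n τ ⬝ᵥ φ l τ) • deriv (ψ n) Real.pi) l h0'
      simpa only [hIdef] using h18
    have heq := funext hval
    rw [heq] at hsum
    exact hsum.unique hsingle
  -- part (i)
  have hβ : (1 + c l * I) ≠ 0 := ne_of_gt (hc l)
  have hi2 : (∫ t in (0:ℝ)..Real.pi, K Real.pi t *ᵥ φ l t)
      = -((c l * I) • ψ l Real.pi) := by
    have hKeq : ∀ t ∈ Set.uIcc (0:ℝ) Real.pi,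
        K Real.pi t *ᵥ φ l t = -(S (Real.pi, t) *ᵥ φ l t) := by
      intro t ht
      rw [Set.uIcc_of_le hπ0] at ht
      rw [stepC Real.pi t ht.1 ht.2 le_rfl, Matrix.neg_mulVec]
    rw [intervalIntegral.integral_congr hKeq, intervalIntegral.integral_neg, hU3]
  have hiβ : (1 + c l * I) • ψ l Real.pi = φ l Real.pi := by
    have h19 : ψ l Real.pi = φ l Real.pi + -((c l * I) • ψ l Real.pi) := by
      conv_lhs => rw [hψ l Real.pi, hi2]
    have h20 := congrArg (fun z => z + (c l * I) • ψ l Real.pi) h19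
    calc (1 + c l * I) • ψ l Real.pi
        = ψ l Real.pi + (c l * I) • ψ l Real.pi := by rw [add_smul, one_smul]
    _ = φ l Real.pi + -((c l * I) • ψ l Real.pi) + (c l * I) • ψ l Real.pi := h20
    _ = φ l Real.pi := by abel
  refine ⟨((inv_smul_eq_iff₀ hβ).mpr hiβ.symm).symm, ?_⟩
  -- part (ii)
  have hii2 : (∫ t in (0:ℝ)..Real.pi, SL10.pdx K Real.pi t *ᵥ φ l t)
      = -((c l * I) • deriv (ψ l) Real.pi) := by
    have hcong : ∀ᵐ t ∂(volume : Measure ℝ), t ∈ Set.uIoc (0:ℝ) Real.pi →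
        SL10.pdx K Real.pi t *ᵥ φ l t = -(S' (Real.pi, t) *ᵥ φ l t) := by
      have hne : ∀ᵐ t : ℝ ∂volume, t ≠ Real.pi := by
        have hset : {a : ℝ | ¬ a ≠ Real.pi} = {Real.pi} := by
          ext a; simp
        rw [ae_iff, hset]
        exact measure_singleton Real.pi
      filter_upwards [hne] with t htne ht
      rw [Set.uIoc_of_le hπ0] at ht
      rw [hKx t ht.1.le (lt_of_le_of_ne ht.2 htne), Matrix.neg_mulVec]
    rw [intervalIntegral.integral_congr_ae hcong, intervalIntegral.integral_neg, hU4]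
  have hiiβ : (1 + c l * I) • deriv (ψ l) Real.pi
      = deriv (φ l) Real.pi + K Real.pi Real.pi *ᵥ φ l Real.pi := by
    have h5 : deriv (ψ l) Real.pi = deriv (φ l) Real.pi
        + (K Real.pi Real.pi *ᵥ φ l Real.pi
          + ∫ t in (0:ℝ)..Real.pi, SL10.pdx K Real.pi t *ᵥ φ l t) := by
      rw [hψderiv l Real.pi]
      rfl
    rw [hii2] at h5
    have h20 := congrArg (fun z => z + (c l * I) • deriv (ψ l) Real.pi) h5
    calc (1 + c l * I) • deriv (ψ l) Real.pi
        = deriv (ψ l) Real.pi + (c l * I) • deriv (ψ l) Real.pi := by rw [add_smul, one_smul]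
    _ = deriv (φ l) Real.pi
        + (K Real.pi Real.pi *ᵥ φ l Real.pi + -((c l * I) • deriv (ψ l) Real.pi))
        + (c l * I) • deriv (ψ l) Real.pi := h20
    _ = deriv (φ l) Real.pi + K Real.pi Real.pi *ᵥ φ l Real.pi := by abel
  have hfinal : (1 + c l * I) • (ℬ *ᵥ deriv (ψ l) Real.pi
      + (𝒜 - ℬ * K Real.pi Real.pi) *ᵥ ψ l Real.pi) = 0 := by
    rw [smul_add, ← Matrix.mulVec_smul, ← Matrix.mulVec_smul, hiiβ, hiβ]
    have hrw : ℬ *ᵥ (deriv (φ l) Real.pi + K Real.pi Real.pi *ᵥ φ l Real.pi)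
        + (𝒜 - ℬ * K Real.pi Real.pi) *ᵥ φ l Real.pi
        = ℬ *ᵥ deriv (φ l) Real.pi + 𝒜 *ᵥ φ l Real.pi := by
      rw [Matrix.mulVec_add, Matrix.sub_mulVec, ← Matrix.mulVec_mulVec]
      abel
    rw [hrw, hφbcπ l]
  exact (smul_eq_zero.mp hfinal).resolve_left hβ
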